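/- Let D ⊆ ℂⁿ be a bounded domain and p ∈ ∂D. Suppose that the closure of D contains no nontrivial analytic disc through p, i.e. every holomorphic map f : Δ → ℂⁿ with f(Δ) ⊆ closure(D) and p ∈ f(Δ) is constant. Then for every η with 0 < η < 1 and every open neighborhood U of p there exists an open neighborhood V of p such that every holomorphic map f : Δ → D with f(0) ∈ V satisfies f(ηΔ) ⊆ U. -/

import Mathlib

open Metric Filter Topology

/-- attraction property of analytic discs: if the closure of a bounded domain
`D` contains no nontrivial analytic disc through the boundary point `p`, then for every
`0 < η < 1` and every neighborhood `U` of `p` there is a neighborhood `V` of `p` such that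
every analytic disc `f : Δ → D` with `f(0) ∈ V` satisfies `f(ηΔ) ⊆ U`. -/
theorem boundary_jets_stmt5 (n : ℕ)
    (D : Set (EuclideanSpace ℂ (Fin n)))
    (hDopen : IsOpen D) (hDconn : IsConnected D) (hDbd : Bornology.IsBounded D)
    (p : EuclideanSpace ℂ (Fin n)) (hp : p ∈ frontier D)
    (hdisc : ∀ f : ℂ → EuclideanSpace ℂ (Fin n),
      DifferentiableOn ℂ f (ball 0 1) → f '' ball 0 1 ⊆ closure D → p ∈ f '' ball 0 1 →
      ∀ x ∈ ball (0 : ℂ) 1, ∀ y ∈ ball (0 : ℂ) 1, f x = f y)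
    (η : ℝ) (hη0 : 0 < η) (hη1 : η < 1)
    (U : Set (EuclideanSpace ℂ (Fin n))) (hUopen : IsOpen U) (hpU : p ∈ U) :
    ∃ V : Set (EuclideanSpace ℂ (Fin n)), IsOpen V ∧ p ∈ V ∧
      ∀ f : ℂ → EuclideanSpace ℂ (Fin n),
        DifferentiableOn ℂ f (ball 0 1) → f '' ball 0 1 ⊆ D → f 0 ∈ V →
        f '' ball 0 η ⊆ U := by
  classical
  by_contra hcon
  push_neg at hcon
  -- Extract a sequence of discs violating the conclusion with `f k 0 → p`.
  have hseq : ∀ k : ℕ, ∃ f : ℂ → EuclideanSpace ℂ (Fin n),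
      DifferentiableOn ℂ f (ball 0 1) ∧ f '' ball 0 1 ⊆ D ∧
      dist (f 0) p < 1 / ((k : ℝ) + 1) ∧ ∃ w ∈ ball (0 : ℂ) η, f w ∉ U := by
    intro k
    obtain ⟨f, hf1, hf2, hf3, hf4⟩ := hcon (ball p (1 / ((k : ℝ) + 1))) isOpen_ball
      (mem_ball_self (by positivity))
    refine ⟨f, hf1, hf2, mem_ball.mp hf3, ?_⟩
    obtain ⟨x, hx, hxU⟩ := Set.not_subset.1 hf4
    obtain ⟨w, hw, rfl⟩ := hx
    exact ⟨w, hw, hxU⟩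
  choose f hfdiff hfD hf0 w hw hfwU using hseq
  -- Bounds and constants
  obtain ⟨M, hM⟩ := hDbd.subset_closedBall 0
  obtain ⟨d, hd⟩ := hDconn.nonempty
  have hM0 : 0 ≤ M := le_trans dist_nonneg (mem_closedBall.mp (hM hd))
  have hdiam : ∀ a ∈ D, ∀ b ∈ D, dist a b ≤ 2 * M := by
    intro a ha b hb
    have h1 : dist a 0 ≤ M := mem_closedBall.mp (hM ha)
    have h2 : dist b 0 ≤ M := mem_closedBall.mp (hM hb)
    calc dist a b ≤ dist a 0 + dist 0 b := dist_triangle _ _ _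
      _ ≤ M + M := by rw [dist_comm (0 : EuclideanSpace ℂ (Fin n)) b]; linarith
      _ = 2 * M := by ring
  set r : ℝ := (1 + η) / 2 with hrdef
  have hηr : η < r := by rw [hrdef]; linarith
  have hr1 : r < 1 := by rw [hrdef]; linarith
  have hr0 : 0 < r := by rw [hrdef]; linarith
  set K : Set ℂ := closedBall 0 r with hKdef
  have hKsub : K ⊆ ball 0 1 := closedBall_subset_ball hr1
  have h1r : 0 < 1 - r := by linarith
  set C : ℝ := (2 * M + 1) / (1 - r) with hCdef
  have hC0 : 0 < C := by positivity
  have hCx : (C.toNNReal : ℝ) = C := Real.coe_toNNReal _ hC0.le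
  -- Each `f k` maps `ball 0 1` into `D`
  have hfmem : ∀ k, ∀ z ∈ ball (0 : ℂ) 1, f k z ∈ D := fun k z hz =>
    hfD k (Set.mem_image_of_mem _ hz)
  -- Uniform Lipschitz bound on K (Cauchy/Schwarz estimate)
  have hlip : ∀ k, LipschitzOnWith C.toNNReal (f k) K := by
    intro k
    rw [lipschitzOnWith_iff_dist_le_mul]
    intro x hx y hy
    rw [hCx]
    have hyb : ball y (1 - r) ⊆ ball (0 : ℂ) 1 := by
      intro z hz
      have h1 : dist z 0 ≤ dist z y + dist y 0 := dist_triangle _ _ _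
      have h2 : dist y 0 ≤ r := mem_closedBall.mp hy
      have h3 : dist z y < 1 - r := mem_ball.mp hz
      exact mem_ball.mpr (by linarith)
    have hyD : f k y ∈ D := hfmem k y (hKsub hy)
    have hmaps : Set.MapsTo (f k) (ball y (1 - r)) (ball (f k y) (2 * M + 1)) := by
      intro z hz
      have : f k z ∈ D := hfmem k z (hyb hz)
      exact mem_ball.mpr (lt_of_le_of_lt (hdiam _ this _ hyD) (by linarith))
    by_cases hdxy : dist x y < 1 - r
    · exact Complex.dist_le_div_mul_dist_of_mapsTo_ball ((hfdiff k).mono hyb) (hmaps.mono_right ball_subset_closedBall)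
        (mem_ball.mpr hdxy)
    · push_neg at hdxy
      have h1 : dist (f k x) (f k y) ≤ 2 * M :=
        hdiam _ (hfmem k x (hKsub hx)) _ hyD
      have h2 : 2 * M + 1 = C * (1 - r) := by rw [hCdef, div_mul_cancel₀ _ h1r.ne']
      calc dist (f k x) (f k y) ≤ 2 * M + 1 := by linarith
        _ = C * (1 - r) := h2
        _ ≤ C * dist x y := by
            exact mul_le_mul_of_nonneg_left hdxy hC0.le
  haveI : CompactSpace K := isCompact_iff_compactSpace.mp (isCompact_closedBall 0 r)
  -- The family as continuous maps on K
  let F : ℕ → C(K, EuclideanSpace ℂ (Fin n)) :=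
    fun k => ⟨K.restrict (f k), ((hlip k).to_restrict).continuous⟩
  set S : Set C(K, EuclideanSpace ℂ (Fin n)) :=
    {g | (∀ x y, dist (g x) (g y) ≤ C * dist x y) ∧ ∀ x, g x ∈ closedBall 0 M} with hSdef
  have hFS : ∀ k, F k ∈ S := by
    intro k
    constructor
    · intro x y
      have := lipschitzOnWith_iff_dist_le_mul.mp (hlip k) x x.2 y y.2
      rwa [hCx] at this
    · intro x
      exact hM (hfmem k x (hKsub x.2))
  have hScomp : IsCompact S := by
    apply ArzelaAscoli.isCompact_of_equicontinuous
    · have himg : ContinuousMap.toFun '' S =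
          {u : K → EuclideanSpace ℂ (Fin n) |
            (∀ x y, dist (u x) (u y) ≤ C * dist x y) ∧ ∀ x, u x ∈ closedBall 0 M} := by
        ext u
        constructor
        · rintro ⟨g, hg, rfl⟩; exact hg
        · intro hu
          have hcont : Continuous u :=
            (lipschitzWith_iff_dist_le_mul.mpr
              (fun x y => by rw [hCx]; exact hu.1 x y)).continuous
          exact ⟨⟨u, hcont⟩, hu, rfl⟩
      rw [himg]
      have hcl : IsClosed {u : K → EuclideanSpace ℂ (Fin n) |
          (∀ x y, dist (u x) (u y) ≤ C * dist x y) ∧ ∀ x, u x ∈ closedBall 0 M} := by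
        have hA : IsClosed {u : K → EuclideanSpace ℂ (Fin n) |
            ∀ x y, dist (u x) (u y) ≤ C * dist x y} := by
          simp only [Set.setOf_forall]
          exact isClosed_iInter fun x => isClosed_iInter fun y =>
            isClosed_le ((continuous_apply x).dist (continuous_apply y)) continuous_const
        have hB : IsClosed {u : K → EuclideanSpace ℂ (Fin n) |
            ∀ x, u x ∈ closedBall 0 M} := by
          simp only [Set.setOf_forall]
          exact isClosed_iInter fun x =>
            (Metric.isClosed_closedBall).preimage (continuous_apply x)
        rw [Set.setOf_and]
        exact hA.inter hB
      exact IsCompact.of_isClosed_subset (isCompact_univ_pi fun _ => isCompact_closedBall 0 M)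
        hcl (fun u hu x _ => hu.2 x)
    · apply equicontinuous_of_continuity_modulus (fun t => C * t)
      · have : Filter.Tendsto (fun t : ℝ => C * t) (nhds 0) (nhds (C * 0)) :=
          (continuous_const.mul continuous_id).tendsto 0
        simpa using this
      · intro x y i
        exact i.2.1 x y
  -- Extract a convergent subsequence of (F k, w k)
  have hwK : ∀ k, w k ∈ closedBall (0 : ℂ) η := fun k => ball_subset_closedBall (hw k)
  obtain ⟨⟨g, bb⟩, hmem, φ, hφ, hconv⟩ :=
    (hScomp.prod (isCompact_closedBall (0 : ℂ) η)).tendsto_subseq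
      (x := fun k => (F k, w k)) (fun k => Set.mk_mem_prod (hFS k) (hwK k))
  have hgconv : Tendsto (fun k => F (φ k)) atTop (𝓝 g) :=
    (continuous_fst.tendsto _).comp hconv
  have hwconv : Tendsto (fun k => w (φ k)) atTop (𝓝 bb) :=
    (continuous_snd.tendsto _).comp hconv
  have hbb : bb ∈ closedBall (0 : ℂ) η := hmem.2
  have hunif : TendstoUniformly (fun k (x : K) => f (φ k) x) (⇑g) atTop :=
    ContinuousMap.tendsto_iff_tendstoUniformly.mp hgconv
  -- Total limit function
  set G : ℂ → EuclideanSpace ℂ (Fin n) :=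
    fun z => if hz : z ∈ K then g ⟨z, hz⟩ else 0 with hGdef
  have hGU : TendstoUniformlyOn (fun k => f (φ k)) G atTop K := by
    rw [tendstoUniformlyOn_iff_tendstoUniformly_comp_coe]
    have hGg : (G ∘ (Subtype.val : K → ℂ)) = ⇑g := by
      funext x
      simp only [Function.comp_apply, hGdef, dif_pos x.2]
    rw [hGg]
    exact hunif
  -- Rescaled limit disc
  have hmaps1 : ∀ z : ℂ, z ∈ ball (0 : ℂ) 1 → (r : ℂ) * z ∈ K := by
    intro z hz
    rw [mem_ball, dist_zero_right] at hz
    rw [hKdef, mem_closedBall, dist_zero_right, norm_mul, Complex.norm_real,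
      Real.norm_of_nonneg hr0.le]
    nlinarith [norm_nonneg z]
  set h : ℂ → EuclideanSpace ℂ (Fin n) := fun z => G ((r : ℂ) * z) with hhdef
  have hhu : TendstoUniformlyOn (fun k z => f (φ k) ((r : ℂ) * z)) h atTop (ball 0 1) := by
    have := (hGU.comp (fun z => (r : ℂ) * z)).mono (fun z hz => hmaps1 z hz)
    exact this
  have hstepdiff : ∀ k : ℕ, DifferentiableOn ℂ (fun z => f (φ k) ((r : ℂ) * z))
      (ball (0 : ℂ) 1) := by
    intro k
    apply DifferentiableOn.comp (hfdiff (φ k))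
    · exact ((differentiable_const _).mul differentiable_id).differentiableOn
    · exact fun z hz => hKsub (hmaps1 z hz)
  have hhdiff : DifferentiableOn ℂ h (ball 0 1) :=
    hhu.tendstoLocallyUniformlyOn.differentiableOn
      (Eventually.of_forall hstepdiff) isOpen_ball
  have himg : h '' ball 0 1 ⊆ closure D := by
    rintro _ ⟨z, hz, rfl⟩
    have ht : Tendsto (fun k => f (φ k) ((r : ℂ) * z)) atTop (𝓝 (h z)) := hhu.tendsto_at hz
    exact mem_closure_of_tendsto ht
      (Eventually.of_forall fun k => hfmem (φ k) _ (hKsub (hmaps1 z hz)))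
  -- h 0 = p
  have hf0p : Tendsto (fun k => f k 0) atTop (𝓝 p) := by
    rw [tendsto_iff_dist_tendsto_zero]
    apply squeeze_zero (fun k => dist_nonneg) (fun k => (hf0 k).le)
    exact tendsto_one_div_add_atTop_nhds_zero_nat
  have hh0 : h 0 = p := by
    have h1 : Tendsto (fun k => f (φ k) ((r : ℂ) * 0)) atTop (𝓝 (h 0)) :=
      hhu.tendsto_at (mem_ball_self one_pos)
    have h2 : Tendsto (fun k => f (φ k) 0) atTop (𝓝 p) :=
      hf0p.comp hφ.tendsto_atTop
    simp only [mul_zero] at h1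
    exact tendsto_nhds_unique h1 h2
  have hconst := hdisc h hhdiff himg ⟨0, mem_ball_self one_pos, hh0⟩
  -- the point ζ = bb / r
  have hrC : (r : ℂ) ≠ 0 := by
    simpa using hr0.ne'
  set ζ : ℂ := bb / (r : ℂ) with hζdef
  have hζ : ζ ∈ ball (0 : ℂ) 1 := by
    rw [mem_ball, dist_zero_right, hζdef, norm_div, Complex.norm_real,
      Real.norm_of_nonneg hr0.le, div_lt_one hr0]
    calc ‖bb‖ ≤ η := by
          have := mem_closedBall.mp hbb; rwa [dist_zero_right] at this
      _ < r := hηr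
  have hrmul : (r : ℂ) * ζ = bb := by
    rw [hζdef, mul_comm, div_mul_cancel₀ _ hrC]
  have hζval : h ζ = G bb := by
    show G ((r : ℂ) * ζ) = G bb
    rw [hrmul]
  have hGwp : G bb = p := by
    rw [← hζval, ← hh0]
    exact hconst ζ hζ 0 (mem_ball_self one_pos)
  -- But G bb ∉ U
  have hwK' : ∀ k, w k ∈ K := fun k =>
    closedBall_subset_closedBall hηr.le (hwK k)
  have hbbK : bb ∈ K := closedBall_subset_closedBall hηr.le hbb
  have hGcont : ContinuousOn G K := by
    rw [continuousOn_iff_continuous_restrict]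
    have : K.domRestrict G = ⇑g := by
      funext x
      simp only [Set.domRestrict_apply, hGdef, dif_pos x.2]
    rw [this]
    exact g.continuous
  have htc : Tendsto (fun k => f (φ k) (w (φ k))) atTop (𝓝 (G bb)) := by
    apply hGU.tendsto_comp (hGcont.continuousWithinAt hbbK)
    exact tendsto_nhdsWithin_of_tendsto_nhds_of_eventually_within _ hwconv
      (Eventually.of_forall fun k => hwK' (φ k))
  have : G bb ∈ Uᶜ :=
    hUopen.isClosed_compl.mem_of_tendsto htc
      (Eventually.of_forall fun k => hfwU (φ k))
  rw [hGwp] at this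
  exact this hpU
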